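/- For the partitioned ensemble with four equiprobable pure qubit states with Bloch vectors ±u_a, ±u_b, where u_a = (e₁+e₂)/√2 and u_b = (e₁−e₂)/√2, the maximal success probability over all compatible pairs of dichotomic POVMs (C,D), namely M = max{(1/4)Σ_z [tr(ρ_{z|a}C(z)) + tr(ρ_{z|b}D(z))] : (C,D) compatible}, equals (1/2)(1 + 1/√2). -/

import Mathlib

open Matrix Complex Finset
open scoped ComplexOrder

noncomputable section

def σ1 : Matrix (Fin 2) (Fin 2) ℂ := !![0, 1; 1, 0]
def σ2 : Matrix (Fin 2) (Fin 2) ℂ := !![0, -Complex.I; Complex.I, 0]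
def σ3 : Matrix (Fin 2) (Fin 2) ℂ := !![1, 0; 0, -1]

/-- `v·σ = v₁σ₁ + v₂σ₂ + v₃σ₃` -/
def dotσ (v : Fin 3 → ℝ) : Matrix (Fin 2) (Fin 2) ℂ :=
  (v 0 : ℂ) • σ1 + (v 1 : ℂ) • σ2 + (v 2 : ℂ) • σ3

/-- A POVM: positive semidefinite effects summing to the identity. -/
def IsPOVM {d : ℕ} {X : Type} [Fintype X] (A : X → Matrix (Fin d) (Fin d) ℂ) : Prop :=
  (∀ x, (A x).PosSemidef) ∧ ∑ x, A x = 1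

/-- Compatibility: existence of a joint POVM with the given margins. -/
def Compatible {d : ℕ} {X Y : Type} [Fintype X] [Fintype Y]
    (A : X → Matrix (Fin d) (Fin d) ℂ) (B : Y → Matrix (Fin d) (Fin d) ℂ) : Prop :=
  ∃ J : X × Y → Matrix (Fin d) (Fin d) ℂ, IsPOVM J ∧
    (∀ x, A x = ∑ y, J (x, y)) ∧ (∀ y, B y = ∑ x, J (x, y))

/-- The generalized incompatibility robustness. -/
def etaG {d : ℕ} {X Y : Type} [Fintype X] [Fintype Y]
    (A : X → Matrix (Fin d) (Fin d) ℂ) (B : Y → Matrix (Fin d) (Fin d) ℂ) : ℝ :=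
  sSup {η : ℝ | η ∈ Set.Icc 0 1 ∧ ∃ C D, IsPOVM C ∧ IsPOVM D ∧
    Compatible (fun x => (η : ℂ) • A x + ((1 - η : ℝ) : ℂ) • C x)
      (fun y => (η : ℂ) • B y + ((1 - η : ℝ) : ℂ) • D y)}

/-- The qubit operator `(I + z v·σ)/2`. -/
def st (v : Fin 3 → ℝ) (z : ℝ) : Matrix (Fin 2) (Fin 2) ℂ :=
  ((1 : ℂ) / 2) • ((1 : Matrix (Fin 2) (Fin 2) ℂ) + (z : ℂ) • dotσ v)

/-- `u_a = (e₁+e₂)/√2`. -/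
def ua : Fin 3 → ℝ := ![1 / Real.sqrt 2, 1 / Real.sqrt 2, 0]

/-- `u_b = (e₁−e₂)/√2`. -/
def ub : Fin 3 → ℝ := ![1 / Real.sqrt 2, -(1 / Real.sqrt 2), 0]

/-- The sign associated with a Boolean outcome (`true ↦ +1`, `false ↦ −1`). -/
def sgn (z : Bool) : ℝ := if z then 1 else -1

/-- Success probability of the discrimination task for the ensemble with Bloch vectors
`±u_a, ±u_b` and dichotomic measurements `C, D`. -/
def Psucc (C D : Bool → Matrix (Fin 2) (Fin 2) ℂ) : ℝ :=
  (1 / 4) * ∑ z : Bool, ((st ua (sgn z) * C z).trace.re + (st ub (sgn z) * D z).trace.re)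


-- ===== auxiliary lemmas =====

lemma trace_mul_self_re_nonneg' (M : Matrix (Fin 2) (Fin 2) ℂ) : 0 ≤ (Mᴴ * M).trace.re := by
  have h : (Mᴴ * M).trace = ∑ j : Fin 2, ∑ i : Fin 2, (starRingEnd ℂ) (M i j) * M i j := by
    simp [Matrix.trace, Matrix.diag, Matrix.mul_apply, Matrix.conjTranspose_apply]
  rw [h]
  simp only [Complex.re_sum]
  refine Finset.sum_nonneg fun j _ => Finset.sum_nonneg fun i _ => ?_
  rw [mul_comm, Complex.mul_conj]
  simp [Complex.normSq_nonneg]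

lemma trace_mul_psd_re_nonneg {A B : Matrix (Fin 2) (Fin 2) ℂ}
    (hA : A.PosSemidef) (hB : B.PosSemidef) : 0 ≤ (A * B).trace.re := by
  obtain ⟨P, rfl⟩ : ∃ P : Matrix (Fin 2) (Fin 2) ℂ, A = Pᴴ * P := by
    open scoped MatrixOrder Matrix.Norms.L2Operator in
    exact CStarAlgebra.nonneg_iff_eq_star_mul_self.mp hA.nonneg
  obtain ⟨Q, rfl⟩ : ∃ Q : Matrix (Fin 2) (Fin 2) ℂ, B = Qᴴ * Q := by
    open scoped MatrixOrder Matrix.Norms.L2Operator in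
    exact CStarAlgebra.nonneg_iff_eq_star_mul_self.mp hB.nonneg
  have h : (Pᴴ * P * (Qᴴ * Q)).trace = ((P * Qᴴ)ᴴ * (P * Qᴴ)).trace := by
    rw [Matrix.conjTranspose_mul, Matrix.conjTranspose_conjTranspose]
    rw [show Pᴴ * P * (Qᴴ * Q) = Pᴴ * (P * Qᴴ * Q) by noncomm_ring,
        Matrix.trace_mul_comm, show P * Qᴴ * Q * Pᴴ = P * Qᴴ * (Q * Pᴴ) by noncomm_ring,
        Matrix.trace_mul_comm]
  rw [h]
  exact trace_mul_self_re_nonneg' _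

lemma psd_smul_real {A : Matrix (Fin 2) (Fin 2) ℂ} (hA : A.PosSemidef) {r : ℝ} (hr : 0 ≤ r) :
    ((r : ℂ) • A).PosSemidef := by
  refine ⟨?_, fun x => ?_⟩
  · rw [Matrix.IsHermitian, Matrix.conjTranspose_smul, hA.1.eq]
    simp
  · exact (hA.smul (a := (r : ℂ)) (by exact_mod_cast hr)).2 x

/-- The matrix `B` used to witness positivity of `cI - (st ua x + st ub y)`. -/
def NB : Bool → Bool → Matrix (Fin 2) (Fin 2) ℂ
  | true, true => !![1, -1; 0, 0]
  | true, false => !![1, Complex.I; 0, 0]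
  | false, true => !![1, -Complex.I; 0, 0]
  | false, false => !![1, 1; 0, 0]

lemma N_eq (x y : Bool) :
    ((1 + (Real.sqrt 2)⁻¹ : ℝ) : ℂ) • (1 : Matrix (Fin 2) (Fin 2) ℂ)
      - (st ua (sgn x) + st ub (sgn y))
    = (((Real.sqrt 2)⁻¹ : ℝ) : ℂ) • ((NB x y)ᴴ * NB x y) := by
  cases x <;> cases y <;>
  · ext i j
    fin_cases i <;> fin_cases j <;>
      simp [st, dotσ, ua, ub, sgn, σ1, σ2, σ3, NB, Matrix.mul_apply, Fin.sum_univ_two,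
        Matrix.one_apply, one_div] <;> ring

lemma N_psd (x y : Bool) :
    (((1 + (Real.sqrt 2)⁻¹ : ℝ) : ℂ) • (1 : Matrix (Fin 2) (Fin 2) ℂ)
      - (st ua (sgn x) + st ub (sgn y))).PosSemidef := by
  rw [N_eq]
  exact psd_smul_real (Matrix.posSemidef_conjTranspose_mul_self _) (by positivity)

lemma key_bound (x y : Bool) {J : Matrix (Fin 2) (Fin 2) ℂ} (hJ : J.PosSemidef) :
    ((st ua (sgn x) + st ub (sgn y)) * J).trace.re
      ≤ (1 + (Real.sqrt 2)⁻¹) * J.trace.re := by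
  have h := trace_mul_psd_re_nonneg (N_psd x y) hJ
  rw [Matrix.sub_mul, Matrix.trace_sub, Complex.sub_re, Matrix.smul_mul, Matrix.one_mul,
    Matrix.trace_smul, smul_eq_mul, Complex.re_ofReal_mul] at h
  linarith

-- ===== witness =====

def Bw : Bool × Bool → Matrix (Fin 2) (Fin 2) ℂ
  | (true, true) => !![1/2, 1/2; 0, 0]
  | (true, false) => !![1/2, -(Complex.I/2); 0, 0]
  | (false, true) => !![1/2, Complex.I/2; 0, 0]
  | (false, false) => !![1/2, -(1/2); 0, 0]

def Jw (p : Bool × Bool) : Matrix (Fin 2) (Fin 2) ℂ := (Bw p)ᴴ * Bw p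

def Cw (z : Bool) : Matrix (Fin 2) (Fin 2) ℂ := Jw (z, true) + Jw (z, false)
def Dw (y : Bool) : Matrix (Fin 2) (Fin 2) ℂ := Jw (true, y) + Jw (false, y)

lemma Jw_psd (p : Bool × Bool) : (Jw p).PosSemidef :=
  Matrix.posSemidef_conjTranspose_mul_self _

lemma Jw_sum : ∑ p : Bool × Bool, Jw p = 1 := by
  rw [Fintype.sum_prod_type]
  simp only [Fintype.sum_bool]
  ext i j
  fin_cases i <;> fin_cases j <;>
    norm_num [Jw, Bw, Matrix.mul_apply, Fin.sum_univ_two, Matrix.one_apply, Complex.ext_iff,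
      Complex.div_re, Complex.div_im, Complex.normSq, map_ofNat]

lemma Cw_povm : IsPOVM Cw := by
  constructor
  · intro z; exact (Jw_psd _).add (Jw_psd _)
  · rw [Fintype.sum_bool]
    rw [show Cw true + Cw false
        = ∑ p : Bool × Bool, Jw p by
          rw [Fintype.sum_prod_type]; simp only [Fintype.sum_bool, Cw]]
    exact Jw_sum

lemma Dw_povm : IsPOVM Dw := by
  constructor
  · intro z; exact (Jw_psd _).add (Jw_psd _)
  · rw [Fintype.sum_bool]
    rw [show Dw true + Dw false
        = ∑ p : Bool × Bool, Jw p by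
          rw [Fintype.sum_prod_type]; simp only [Fintype.sum_bool, Dw]; abel]
    exact Jw_sum

lemma CD_compatible : Compatible Cw Dw := by
  refine ⟨Jw, ⟨Jw_psd, Jw_sum⟩, fun x => ?_, fun y => ?_⟩
  · rw [Fintype.sum_bool, Cw]
  · rw [Fintype.sum_bool, Dw]

set_option maxHeartbeats 1000000 in
lemma Psucc_w : Psucc Cw Dw = (1 / 2) * (1 + 1 / Real.sqrt 2) := by
  have hs : Real.sqrt 2 * Real.sqrt 2 = 2 := Real.mul_self_sqrt (by norm_num)
  have hs0 : Real.sqrt 2 ≠ 0 := by positivity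
  have h1 : (st ua (sgn true) * Cw true).trace.re = 1/2 + (Real.sqrt 2)⁻¹/2 := by
    norm_num [Cw, Dw, Jw, Bw, st, dotσ, ua, ub, sgn, σ1, σ2, σ3,
      Matrix.trace_fin_two, Matrix.mul_apply, Fin.sum_univ_two, Matrix.one_apply,
      Complex.add_re, Complex.mul_re, Complex.ofReal_re, Complex.ofReal_im,
      Complex.add_im, Complex.mul_im, Complex.div_re, Complex.div_im, Complex.normSq]
    field_simp
    nlinarith [hs, Real.sqrt_nonneg 2]
  have h2 : (st ub (sgn true) * Dw true).trace.re = 1/2 + (Real.sqrt 2)⁻¹/2 := by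
    norm_num [Cw, Dw, Jw, Bw, st, dotσ, ua, ub, sgn, σ1, σ2, σ3,
      Matrix.trace_fin_two, Matrix.mul_apply, Fin.sum_univ_two, Matrix.one_apply,
      Complex.add_re, Complex.mul_re, Complex.ofReal_re, Complex.ofReal_im,
      Complex.add_im, Complex.mul_im, Complex.div_re, Complex.div_im, Complex.normSq]
    field_simp
    nlinarith [hs, Real.sqrt_nonneg 2]
  have h3 : (st ua (sgn false) * Cw false).trace.re = 1/2 + (Real.sqrt 2)⁻¹/2 := by
    norm_num [Cw, Dw, Jw, Bw, st, dotσ, ua, ub, sgn, σ1, σ2, σ3,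
      Matrix.trace_fin_two, Matrix.mul_apply, Fin.sum_univ_two, Matrix.one_apply,
      Complex.add_re, Complex.mul_re, Complex.ofReal_re, Complex.ofReal_im,
      Complex.add_im, Complex.mul_im, Complex.div_re, Complex.div_im, Complex.normSq]
    field_simp
    nlinarith [hs, Real.sqrt_nonneg 2]
  have h4 : (st ub (sgn false) * Dw false).trace.re = 1/2 + (Real.sqrt 2)⁻¹/2 := by
    norm_num [Cw, Dw, Jw, Bw, st, dotσ, ua, ub, sgn, σ1, σ2, σ3,
      Matrix.trace_fin_two, Matrix.mul_apply, Fin.sum_univ_two, Matrix.one_apply,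
      Complex.add_re, Complex.mul_re, Complex.ofReal_re, Complex.ofReal_im,
      Complex.add_im, Complex.mul_im, Complex.div_re, Complex.div_im, Complex.normSq]
    field_simp
    nlinarith [hs, Real.sqrt_nonneg 2]
  rw [Psucc, Fintype.sum_bool, h1, h2, h3, h4,
    show (1:ℝ)/Real.sqrt 2 = (Real.sqrt 2)⁻¹ from one_div _]
  ring

/-- for the partitioned ensemble with Bloch vectors `±u_a, ±u_b`, the maximal
success probability over all compatible pairs of dichotomic qubit POVMs equals
`(1/2)(1 + 1/√2)`. -/
theorem stmt_17 :
    IsGreatest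
      {p : ℝ | ∃ C D : Bool → Matrix (Fin 2) (Fin 2) ℂ,
        IsPOVM C ∧ IsPOVM D ∧ Compatible C D ∧ p = Psucc C D}
      ((1 / 2) * (1 + 1 / Real.sqrt 2)) := by
  constructor
  · exact ⟨Cw, Dw, Cw_povm, Dw_povm, CD_compatible, Psucc_w.symm⟩
  · rintro p ⟨C, D, hC, hD, ⟨J, ⟨hJpsd, hJsum⟩, hCm, hDm⟩, rfl⟩
    have key : ∀ x y : Bool,
        ((st ua (sgn x) + st ub (sgn y)) * J (x, y)).trace.re
          ≤ (1 + (Real.sqrt 2)⁻¹) * (J (x, y)).trace.re :=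
      fun x y => key_bound x y (hJpsd _)
    have hsum : ∑ x : Bool, ∑ y : Bool, (J (x, y)).trace.re = 2 := by
      have : (∑ p : Bool × Bool, J p).trace = 2 := by
        rw [hJsum]; simp [Matrix.trace_fin_two, Matrix.one_apply]
      rw [Fintype.sum_prod_type] at this
      have h2 : (∑ x : Bool, ∑ y : Bool, (J (x, y)).trace).re = (2 : ℂ).re := by
        rw [← this]; congr 1; simp [Matrix.trace_sum]
      simpa [Complex.re_sum] using h2
    have hP : Psucc C D
        = (1 / 4) * ∑ x : Bool, ∑ y : Bool,
            ((st ua (sgn x) + st ub (sgn y)) * J (x, y)).trace.re := by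
      rw [Psucc]
      congr 1
      have hCexp : ∀ x : Bool, (st ua (sgn x) * C x).trace.re
          = ∑ y : Bool, (st ua (sgn x) * J (x, y)).trace.re := by
        intro x
        rw [hCm x, Matrix.mul_sum, Matrix.trace_sum, Complex.re_sum]
      have hDexp : ∀ y : Bool, (st ub (sgn y) * D y).trace.re
          = ∑ x : Bool, (st ub (sgn y) * J (x, y)).trace.re := by
        intro y
        rw [hDm y, Matrix.mul_sum, Matrix.trace_sum, Complex.re_sum]
      simp only [hCexp, hDexp]
      rw [Finset.sum_add_distrib, Finset.sum_comm (f := fun z x => (st ub (sgn z) * J (x, z)).trace.re)]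
      rw [← Finset.sum_add_distrib]
      refine Finset.sum_congr rfl fun x _ => ?_
      rw [← Finset.sum_add_distrib]
      refine Finset.sum_congr rfl fun y _ => ?_
      rw [Matrix.add_mul, Matrix.trace_add, Complex.add_re]
    rw [hP]
    have hle : ∑ x : Bool, ∑ y : Bool,
        ((st ua (sgn x) + st ub (sgn y)) * J (x, y)).trace.re
        ≤ (1 + (Real.sqrt 2)⁻¹) * 2 := by
      calc ∑ x : Bool, ∑ y : Bool, ((st ua (sgn x) + st ub (sgn y)) * J (x, y)).trace.re
          ≤ ∑ x : Bool, ∑ y : Bool, (1 + (Real.sqrt 2)⁻¹) * (J (x, y)).trace.re :=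
            Finset.sum_le_sum fun x _ => Finset.sum_le_sum fun y _ => key x y
        _ = (1 + (Real.sqrt 2)⁻¹) * ∑ x : Bool, ∑ y : Bool, (J (x, y)).trace.re := by
            rw [Finset.mul_sum]; exact Finset.sum_congr rfl fun x _ => (Finset.mul_sum _ _ _).symm
        _ = (1 + (Real.sqrt 2)⁻¹) * 2 := by rw [hsum]
    rw [show (1:ℝ)/Real.sqrt 2 = (Real.sqrt 2)⁻¹ from one_div _]
    linarith
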